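/- The tableau B produced by sorting each column of A into nondecreasing order is the unique standard tableau with the same support as A. In particular, for any p-row tableau A with rows in D, there exists a unique standard tableau B with supp(A) = supp(B), and it is obtained by columnwise sorting. -/

import Mathlib

def inD {n : ℕ} (m : ℕ) (a : Fin n → ℕ) : Prop :=
  (∀ j, 1 ≤ a j) ∧ StrictMono a ∧ ∀ j, a j ≤ m

def colMultiset {p n : ℕ} (A : Fin p → Fin n → ℕ) (j : Fin n) : Multiset ℕ :=
  Finset.univ.val.map (fun i => A i j)

section aux
variable {p n : ℕ}

lemma colMultiset_eq_ofFn (A : Fin p → Fin n → ℕ) (j : Fin n) :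
    colMultiset A j = ↑(List.ofFn (fun i => A i j)) := by
  simp [colMultiset]

lemma card_colMultiset (A : Fin p → Fin n → ℕ) (j : Fin n) :
    Multiset.card (colMultiset A j) = p := by
  simp [colMultiset]

lemma length_sortCol (A : Fin p → Fin n → ℕ) (j : Fin n) :
    ((colMultiset A j).sort (· ≤ ·)).length = p := by
  rw [Multiset.length_sort, colMultiset, Multiset.card_map]
  simp

/-- In a sorted list, positions 0..i are all ≤ l[i]. -/
lemma countP_le_ge (l : List ℕ) (hs : l.Pairwise (· ≤ ·)) (i : ℕ) (hi : i < l.length) :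
    i + 1 ≤ l.countP (fun x => x ≤ l.getD i 0) := by
  set c := l.getD i 0 with hc
  have h1 : l = l.take (i+1) ++ l.drop (i+1) := (List.take_append_drop _ _).symm
  rw [h1, List.countP_append]
  have h2 : (l.take (i+1)).countP (fun x => x ≤ c) = i + 1 := by
    rw [List.countP_eq_length.2, List.length_take]
    · omega
    · intro a ha
      obtain ⟨k, hk, hka⟩ := List.mem_iff_getElem.1 ha
      rw [List.length_take] at hk
      have hk2 : k < l.length := by omega
      rw [List.getElem_take] at hka
      subst hka
      have := hs.rel_get_of_le (a := ⟨k, hk2⟩) (b := ⟨i, hi⟩) (by simpa using by omega)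
      simp only [List.get_eq_getElem] at this
      simp only [decide_eq_true_eq, hc, List.getD_eq_getElem l 0 hi]
      exact this
  omega

/-- In a sorted list, if at least i+1 entries are < c, then l[i] < c. -/
lemma get_lt_of_countP (l : List ℕ) (hs : l.Pairwise (· ≤ ·)) (i : ℕ) (hi : i < l.length)
    (c : ℕ) (h : i + 1 ≤ l.countP (fun x => x < c)) : l.getD i 0 < c := by
  by_contra hc
  push_neg at hc
  have h1 : l = l.take i ++ l.drop i := (List.take_append_drop _ _).symm
  rw [h1, List.countP_append] at h
  have h2 : (l.drop i).countP (fun x => x < c) = 0 := by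
    rw [List.countP_eq_zero]
    intro a ha
    obtain ⟨k, hk, hka⟩ := List.mem_iff_getElem.1 ha
    rw [List.length_drop] at hk
    rw [List.getElem_drop] at hka
    subst hka
    have hik : i + k < l.length := by omega
    have := hs.rel_get_of_le (a := ⟨i, hi⟩) (b := ⟨i + k, hik⟩) (by simp)
    simp only [List.get_eq_getElem] at this
    simp only [decide_eq_true_eq]
    rw [List.getD_eq_getElem l 0 hi] at hc
    omega
  have h3 : (l.take i).countP (fun x => x < c) ≤ i := by
    calc (l.take i).countP (fun x => x < c) ≤ (l.take i).length := List.countP_le_length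
    _ ≤ i := by simp
  omega

lemma countP_colMultiset (A : Fin p → Fin n → ℕ) (j : Fin n) (q : ℕ → Prop)
    [DecidablePred q] :
    Multiset.countP q (colMultiset A j) = (Finset.univ.filter (fun k => q (A k j))).card := by
  rw [colMultiset, Multiset.countP_map]
  rfl

end aux

/-- columnwise sorted tableau -/
def sortedTab {p n : ℕ} (A : Fin p → Fin n → ℕ) : Fin p → Fin n → ℕ :=
  fun i j => ((colMultiset A j).sort (· ≤ ·)).getD i 0

section main
variable {p n : ℕ} (A : Fin p → Fin n → ℕ)

lemma sortedTab_mem (i : Fin p) (j : Fin n) :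
    ∃ k, A k j = sortedTab A i j := by
  have hi : (i : ℕ) < ((colMultiset A j).sort (· ≤ ·)).length := by
    rw [length_sortCol]; exact i.2
  have : sortedTab A i j ∈ (colMultiset A j).sort (· ≤ ·) := by
    rw [sortedTab, List.getD_eq_getElem _ _ hi]
    exact List.getElem_mem _
  rw [Multiset.mem_sort, colMultiset, Multiset.mem_map] at this
  obtain ⟨k, _, hk⟩ := this
  exact ⟨k, hk⟩

lemma colMultiset_sortedTab (j : Fin n) :
    colMultiset (sortedTab A) j = colMultiset A j := by
  rw [colMultiset_eq_ofFn]
  rw [← Multiset.sort_eq (colMultiset A j) (· ≤ ·)]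
  congr 1
  apply List.ext_getElem
  · rw [List.length_ofFn, Multiset.length_sort, card_colMultiset]
  · intro k h1 h2
    simp only [List.getElem_ofFn, sortedTab]
    rw [List.getD_eq_getElem]

lemma sortedTab_col_mono (j : Fin n) : Monotone (fun i => sortedTab A i j) := by
  intro a b hab
  have hs := Multiset.pairwise_sort (colMultiset A j) (· ≤ ·)
  have hl := length_sortCol A j
  simp only [sortedTab]
  rw [List.getD_eq_getElem _ _ (by omega : (a:ℕ) < _),
      List.getD_eq_getElem _ _ (by omega : (b:ℕ) < _)]
  exact hs.rel_get_of_le (a := ⟨a, by omega⟩) (b := ⟨b, by omega⟩) (by simpa using hab)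

lemma sortedTab_row_strictMono (hlt : ∀ k : Fin p, ∀ j j' : Fin n, j < j' → A k j < A k j')
    (i : Fin p) : StrictMono (fun j => sortedTab A i j) := by
  intro j j' hjj
  have hs := Multiset.pairwise_sort (colMultiset A j) (· ≤ ·)
  have hs' := Multiset.pairwise_sort (colMultiset A j') (· ≤ ·)
  have hl := length_sortCol A j
  have hl' := length_sortCol A j'
  set c := sortedTab A i j' with hc
  -- at least i+1 entries of column j' are ≤ c
  have h1 : (i : ℕ) + 1 ≤ Multiset.countP (fun x => x ≤ c) (colMultiset A j') := by
    have := countP_le_ge ((colMultiset A j').sort (· ≤ ·)) hs' i (by omega)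
    rw [← Multiset.sort_eq (colMultiset A j') (· ≤ ·), Multiset.coe_countP]
    convert this using 2
    rfl
  -- hence at least i+1 entries of column j are < c
  have h2 : (i : ℕ) + 1 ≤ Multiset.countP (fun x => x < c) (colMultiset A j) := by
    rw [countP_colMultiset] at h1 ⊢
    refine le_trans h1 (Finset.card_le_card ?_)
    intro k hk
    simp only [Finset.mem_filter, Finset.mem_univ, true_and] at hk ⊢
    exact lt_of_lt_of_le (hlt k j j' hjj) hk
  have := get_lt_of_countP ((colMultiset A j).sort (· ≤ ·)) hs i (by omega) c
    (by rw [← Multiset.sort_eq (colMultiset A j) (· ≤ ·), Multiset.coe_countP] at h2;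
        convert h2 using 2)
  exact this

end main

/-- For any `p`-row tableau `A` with rows in `D`, there exists a unique standard
tableau `B` (rows in `D`, columns nondecreasing) with the same column supports as `A`;
it is obtained from `A` by columnwise sorting. -/
theorem stmt_6 {p n m : ℕ} (A : Fin p → Fin n → ℕ)
    (hrows : ∀ i, inD m (A i)) :
    ∃! B : Fin p → Fin n → ℕ,
      (∀ i, inD m (B i)) ∧
      (∀ j : Fin n, Monotone (fun i => B i j)) ∧
      (∀ j, colMultiset B j = colMultiset A j) := by
  refine ⟨sortedTab A, ⟨?_, sortedTab_col_mono A, colMultiset_sortedTab A⟩, ?_⟩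
  · intro i
    refine ⟨?_, ?_, ?_⟩
    · intro j
      obtain ⟨k, hk⟩ := sortedTab_mem A i j
      rw [← hk]; exact (hrows k).1 j
    · exact sortedTab_row_strictMono A (fun k j j' h => (hrows k).2.1 h) i
    · intro j
      obtain ⟨k, hk⟩ := sortedTab_mem A i j
      rw [← hk]; exact (hrows k).2.2 j
  · rintro B ⟨-, hmono, hsupp⟩
    funext i j
    have hs := Multiset.pairwise_sort (colMultiset A j) (· ≤ ·)
    have hl := length_sortCol A j
    have hperm : List.Perm (List.ofFn (fun i => B i j)) ((colMultiset A j).sort (· ≤ ·)) := by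
      rw [← Multiset.coe_eq_coe, Multiset.sort_eq, ← colMultiset_eq_ofFn]
      exact hsupp j
    have heq : List.ofFn (fun i => B i j) = (colMultiset A j).sort (· ≤ ·) :=
      List.Perm.eq_of_pairwise' (List.pairwise_ofFn.2 (fun a b h => hmono j h.le)) hs hperm
    have : (List.ofFn (fun i => B i j)).getD i 0 = sortedTab A i j := by
      rw [heq]; rfl
    rw [← this, List.getD_eq_getElem _ _ (by simp [i.2]), List.getElem_ofFn]
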